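/- Every finite nonempty chordal graph contains a simplicial vertex, i.e., a vertex whose set of neighbours induces a clique. -/

import Mathlib

open SimpleGraph Finset

/-- `S` is an independent set in `G`. -/
def IndepIn {V : Type*} (G : SimpleGraph V) (S : Finset V) : Prop :=
  ∀ u ∈ S, ∀ v ∈ S, ¬ G.Adj u v

/-- The family `I` admits a rainbow independent `m`-set in `G`: `m` distinct pairwise
non-adjacent vertices, each chosen from a distinct member of the family. -/
def HasRainbowIndep {V ι : Type*} (G : SimpleGraph V) (I : ι → Finset V) (m : ℕ) : Prop :=
  ∃ (j : Fin m → ι) (v : Fin m → V), Function.Injective j ∧ Function.Injective v ∧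
    (∀ i, v i ∈ I (j i)) ∧ ∀ i i' : Fin m, i ≠ i' → ¬ G.Adj (v i) (v i')

/-- `G` contains no induced copy of `H`. -/
def IndFree {V W : Type*} (G : SimpleGraph V) (H : SimpleGraph W) : Prop :=
  ¬ ∃ f : W ↪ V, ∀ a b : W, G.Adj (f a) (f b) ↔ H.Adj a b

/-- A graph is chordal if it has no induced cycle of length at least 4. -/
def Chordal {V : Type*} (G : SimpleGraph V) : Prop :=
  ∀ ℓ : ℕ, 4 ≤ ℓ → IndFree G (SimpleGraph.cycleGraph ℓ)

section ChordalAux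

variable {V : Type*}

variable {V : Type*}

/-- Reachability by a walk all of whose vertices lie in the finset `t`. -/
inductive ReachIn (G : SimpleGraph V) (t : Set V) : V → V → Prop
  | refl {x : V} (hx : x ∈ t) : ReachIn G t x x
  | tail {x y z : V} (h : ReachIn G t x y) (hyz : G.Adj y z) (hz : z ∈ t) :
      ReachIn G t x z

namespace ReachIn

variable {G : SimpleGraph V} {t : Set V} {x y z : V}

lemma mem_left (h : ReachIn G t x y) : x ∈ t := by
  induction h with
  | refl hx => exact hx
  | tail _ _ _ ih => exact ih

lemma mem_right (h : ReachIn G t x y) : y ∈ t := by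
  induction h with
  | refl hx => exact hx
  | tail _ _ hz _ => exact hz

lemma trans (hxy : ReachIn G t x y) (hyz : ReachIn G t y z) : ReachIn G t x z := by
  induction hyz with
  | refl _ => exact hxy
  | tail _ h hz ih => exact ih.tail h hz

lemma head (hyz : ReachIn G t y z) (hxy : G.Adj x y) (hx : x ∈ t) : ReachIn G t x z :=
  ((ReachIn.refl hx).tail hxy hyz.mem_left).trans hyz

lemma symm (h : ReachIn G t x y) : ReachIn G t y x := by
  induction h with
  | refl hx => exact ReachIn.refl hx
  | tail h hyz hz ih => exact ih.head hyz.symm hz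

lemma mono {t' : Set V} (hts : t ⊆ t') (h : ReachIn G t x y) : ReachIn G t' x y := by
  induction h with
  | refl hx => exact ReachIn.refl (hts hx)
  | tail _ hyz hz ih => exact ih.tail hyz (hts hz)

/-- If `x` reaches `z` in `t` and `x ≠ u`, then either `x` reaches `z` avoiding `u`,
or `x` reaches (avoiding `u`) some neighbour of `u`. -/
lemma avoid {u : V} (h : ReachIn G t x z) (hxu : x ≠ u) :
    ReachIn G (t \ {u}) x z ∨ ∃ w, ReachIn G (t \ {u}) x w ∧ G.Adj w u := by
  induction h with
  | refl hx => exact Or.inl (ReachIn.refl ⟨hx, hxu⟩)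
  | @tail y' z' h hyz hz ih =>
    rcases ih with hr | ⟨w, hw⟩
    · by_cases hzu : z' = u
      · exact Or.inr ⟨y', hr, hzu ▸ hyz⟩
      · exact Or.inl (hr.tail hyz ⟨hz, by simpa using hzu⟩)
    · exact Or.inr ⟨w, hw⟩

end ReachIn

/-- A walk witness for reachability, all of whose vertices reach `u` within `t`. -/
lemma ReachIn.exists_walk {G : SimpleGraph V} {t : Set V} {u v : V}
    (h : ReachIn G t u v) :
    ∃ n, ∃ p : ℕ → V, p 0 = u ∧ p n = v ∧ (∀ i < n, G.Adj (p i) (p (i+1))) ∧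
      ∀ i ≤ n, ReachIn G t u (p i) := by
  induction h with
  | refl hx => exact ⟨0, fun _ => u, rfl, rfl, by omega, fun i _ => ReachIn.refl hx⟩
  | @tail y' z' h hyz hz ih =>
    obtain ⟨n, p, hp0, hpn, hchain, hreach⟩ := ih
    refine ⟨n + 1, fun i => if i ≤ n then p i else z', by simp [hp0], by simp, ?_, ?_⟩
    · intro i hi
      rcases Nat.lt_or_ge i n with h1 | h1
      · simpa [Nat.le_of_lt h1, Nat.succ_le_of_lt h1] using hchain i h1
      · have : i = n := by omega
        subst this
        simpa [hpn] using hyz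
    · intro i hi
      by_cases h1 : i ≤ n
      · simpa [h1] using hreach i h1
      · have : i = n + 1 := by omega
        simp only [this]
        simpa using h.tail hyz hz

/-- Walks inside a two-element set can't move between non-adjacent vertices. -/
lemma ReachIn.eq_of_pair {G : SimpleGraph V} {t : Set V} {x y a b : V}
    (h : ReachIn G t x y) (ht : ∀ w ∈ t, w = a ∨ w = b) (hab : ¬ G.Adj a b) : x = y := by
  induction h with
  | refl _ => rfl
  | @tail y' z' h hyz hz ih =>
    exfalso
    rcases ht y' h.mem_right with h1 | h1 <;> rcases ht z' hz with h2 | h2 <;>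
      subst h1 <;> subst h2 <;>
      first
        | exact G.irrefl hyz
        | exact hab hyz
        | exact hab hyz.symm

variable {V : Type*}

/-- From any walk from `x` to `y` with interior in `P`, extract an induced path. -/
lemma exists_induced_path (G : SimpleGraph V) (P : V → Prop) (x y : V)
    (hxy : x ≠ y) (hnadj : ¬ G.Adj x y)
    (hex : ∃ n, ∃ p : ℕ → V, p 0 = x ∧ p n = y ∧ (∀ i < n, G.Adj (p i) (p (i+1))) ∧
      (∀ i, 0 < i → i < n → P (p i))) :
    ∃ n, ∃ p : ℕ → V, 2 ≤ n ∧ p 0 = x ∧ p n = y ∧ (∀ i, 0 < i → i < n → P (p i)) ∧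
      (∀ i j, i < j → j ≤ n → p i ≠ p j) ∧
      (∀ i j, i < j → j ≤ n → (G.Adj (p i) (p j) ↔ j = i + 1)) := by
  classical
  set Q : ℕ → Prop := fun n => ∃ p : ℕ → V, p 0 = x ∧ p n = y ∧
      (∀ i < n, G.Adj (p i) (p (i+1))) ∧ (∀ i, 0 < i → i < n → P (p i)) with hQ
  have hexQ : ∃ n, Q n := hex
  obtain ⟨p, hp0, hpn, hchain, hint⟩ := Nat.find_spec hexQ
  set n := Nat.find hexQ with hn
  have hmin : ∀ k, k < n → ¬ Q k := fun k hk => Nat.find_min hexQ hk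
  have hn2 : 2 ≤ n := by
    rcases Nat.lt_or_ge n 2 with h | h
    · interval_cases n
      · exact absurd (hp0 ▸ hpn ▸ rfl) hxy
      · exact absurd (by have := hchain 0 (by omega); rwa [hp0, hpn] at this) hnadj
    · exact h
  -- splicing: a shorter walk contradicts minimality
  have splice : ∀ i k : ℕ, 1 ≤ k → i + k ≤ n → i < n - k →
      G.Adj (p i) (p (i + k + 1)) → False := by
    intro i k hk hikn hilt hadj
    apply hmin (n - k) (by omega)
    refine ⟨fun t => if t ≤ i then p t else p (t + k), by simp [hp0], ?_, ?_, ?_⟩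
    · have h1 : ¬ (n - k ≤ i) := by omega
      simp only [h1, if_neg, if_false]
      rw [show n - k + k = n by omega, hpn]
    · intro t ht
      rcases Nat.lt_trichotomy t i with h1 | h1 | h1
      · simp only [show t ≤ i by omega, show t + 1 ≤ i by omega, if_pos]
        exact hchain t (by omega)
      · subst h1
        simp only [le_refl, if_pos, show ¬ (t + 1 ≤ t) by omega, if_neg, if_false]
        rwa [show t + 1 + k = t + k + 1 by omega]
      · simp only [show ¬ t ≤ i by omega, show ¬ (t + 1 ≤ i) by omega, if_neg, if_false]
        rw [show t + 1 + k = t + k + 1 by omega]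
        exact hchain (t + k) (by omega)
    · intro t ht0 htn
      by_cases h1 : t ≤ i
      · simpa [h1] using hint t ht0 (by omega)
      · simpa [h1] using hint (t + k) (by omega) (by omega)
  have splice_eq : ∀ i j : ℕ, i < j → j ≤ n → p i = p j → False := by
    intro i j hij hjn heq
    by_cases hij0 : i = 0 ∧ j = n
    · exact hxy (hp0 ▸ hij0.1 ▸ hpn ▸ hij0.2 ▸ heq ▸ rfl)
    · apply hmin (n - (j - i)) (by omega)
      refine ⟨fun t => if t ≤ i then p t else p (t + (j - i)), by simp [hp0], ?_, ?_, ?_⟩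
      · by_cases h1 : n - (j - i) ≤ i
        · have h2 : j = n := by omega
          have h3 : n - (j - i) = i := by omega
          simp only [h3, le_refl, if_pos]
          rw [heq, h2, hpn]
        · simp only [h1, if_neg, if_false]
          rw [show n - (j - i) + (j - i) = n by omega, hpn]
      · intro t ht
        rcases Nat.lt_trichotomy t i with h1 | h1 | h1
        · simp only [show t ≤ i by omega, show t + 1 ≤ i by omega, if_pos]
          exact hchain t (by omega)
        · subst h1
          have hjn' : j < n := by omega
          have : p t = p j := heq
          simp only [le_refl, if_pos, this, show ¬ (t + 1 ≤ t) by omega, if_neg, if_false]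
          simpa [show t + 1 + (j - t) = j + 1 by omega] using hchain j hjn'
        · simp only [show ¬ t ≤ i by omega, show ¬ (t + 1 ≤ i) by omega, if_neg, if_false]
          rw [show t + 1 + (j - i) = t + (j - i) + 1 by omega]
          exact hchain (t + (j - i)) (by omega)
      · intro t ht0 htn
        by_cases h1 : t ≤ i
        · simpa [h1] using hint t ht0 (by omega)
        · simpa [h1] using hint (t + (j - i)) (by omega) (by omega)
  refine ⟨n, p, hn2, hp0, hpn, hint, fun i j hij hjn h => splice_eq i j hij hjn h, ?_⟩
  intro i j hij hjn
  constructor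
  · intro hadj
    by_contra hne
    exact splice i (j - i - 1) (by omega) (by omega) (by omega)
      (by rwa [show i + (j - i - 1) + 1 = j by omega])
  · rintro rfl
    exact hchain i (by omega)

lemma fin_cycle_adj {ℓ : ℕ} (hl : 4 ≤ ℓ) (u v : Fin ℓ) (huv : u.val < v.val) :
    (cycleGraph ℓ).Adj u v ↔ (v.val = u.val + 1 ∨ (u.val = 0 ∧ v.val = ℓ - 1)) := by
  have hv : v.val < ℓ := v.isLt
  rw [cycleGraph_adj']
  rw [Fin.sub_def, Fin.sub_def]
  simp only []
  rw [show ℓ - v.val + u.val = ℓ - (v.val - u.val) by omega,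
      show ℓ - u.val + v.val = ℓ + (v.val - u.val) by omega,
      Nat.add_mod_left, Nat.mod_eq_of_lt (by omega), Nat.mod_eq_of_lt (by omega)]
  omega

/-- Two internally-disjoint induced paths between non-adjacent `x`, `y` give an
induced cycle, impossible in a chordal graph. -/
lemma no_double_path (G : SimpleGraph V) (hG : Chordal G)
    {A B : V → Prop} {x y : V} {p q : ℕ → V} {n m : ℕ}
    (hn : 2 ≤ n) (hm : 2 ≤ m)
    (hp0 : p 0 = x) (hpn : p n = y) (hq0 : q 0 = x) (hqm : q m = y)
    (hpint : ∀ i, 0 < i → i < n → A (p i)) (hqint : ∀ i, 0 < i → i < m → B (q i))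
    (hpinj : ∀ i j, i < j → j ≤ n → p i ≠ p j)
    (hpadj : ∀ i j, i < j → j ≤ n → (G.Adj (p i) (p j) ↔ j = i + 1))
    (hqinj : ∀ i j, i < j → j ≤ m → q i ≠ q j)
    (hqadj : ∀ i j, i < j → j ≤ m → (G.Adj (q i) (q j) ↔ j = i + 1))
    (hAB : ∀ u v, A u → B v → ¬ G.Adj u v ∧ u ≠ v) : False := by
  set ℓ := n + m with hℓ
  have hl4 : 4 ≤ ℓ := by omega
  set c : ℕ → V := fun i => if i ≤ n then p i else q (ℓ - i) with hc
  have key : ∀ i j, i < j → j < ℓ →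
      ((G.Adj (c i) (c j) ↔ (j = i + 1 ∨ (i = 0 ∧ j = ℓ - 1))) ∧ c i ≠ c j) := by
    intro i j hij hjl
    by_cases hjn : j ≤ n
    · -- both on p
      have hci : c i = p i := by simp [hc, show i ≤ n by omega]
      have hcj : c j = p j := by simp [hc, hjn]
      rw [hci, hcj]
      refine ⟨?_, hpinj i j hij hjn⟩
      rw [hpadj i j hij hjn]
      omega
    · have hj1 : 1 ≤ ℓ - j := by omega
      have hj2 : ℓ - j ≤ m - 1 := by omega
      have hcj : c j = q (ℓ - j) := by simp [hc, hjn]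
      by_cases hin : i ≤ n
      · rcases Nat.lt_trichotomy 0 i with hi0 | hi0 | hi0
        · rcases Nat.eq_or_lt_of_le hin with hieq | hilt
          · -- i = n : c i = y = q m
            have hci : c i = q m := by simp [hc, hin, hieq, hpn, hqm]
            rw [hci, hcj]
            constructor
            · rw [G.adj_comm, hqadj (ℓ - j) m (by omega) le_rfl]
              omega
            · intro h
              exact hqinj (ℓ - j) m (by omega) le_rfl h.symm
          · -- 0 < i < n : interior of p vs interior of q
            have hci : c i = p i := by simp [hc, hin]
            rw [hci, hcj]
            have h := hAB (p i) (q (ℓ - j)) (hpint i hi0 hilt) (hqint (ℓ - j) (by omega) (by omega))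
            refine ⟨?_, h.2⟩
            simp only [h.1, false_iff]
            omega
        · -- i = 0 : c i = x = q 0
          subst hi0
          have hci : c 0 = q 0 := by simp [hc, hp0, hq0]
          rw [hci, hcj]
          constructor
          · rw [hqadj 0 (ℓ - j) (by omega) (by omega)]
            omega
          · exact hqinj 0 (ℓ - j) (by omega) (by omega)
        · omega
      · -- both on q interior
        have hi1 : 1 ≤ ℓ - i := by omega
        have hci : c i = q (ℓ - i) := by simp [hc, hin]
        rw [hci, hcj]
        constructor
        · rw [G.adj_comm, hqadj (ℓ - j) (ℓ - i) (by omega) (by omega)]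
          omega
        · intro h
          exact hqinj (ℓ - j) (ℓ - i) (by omega) (by omega) h.symm
  refine hG ℓ hl4 ⟨⟨fun i => c i.val, ?_⟩, ?_⟩
  · intro u v huv
    rcases Nat.lt_trichotomy u.val v.val with h | h | h
    · exact absurd huv (key u.val v.val h v.isLt).2
    · exact Fin.ext h
    · exact absurd huv.symm (key v.val u.val h u.isLt).2
  · intro u v
    rcases Nat.lt_trichotomy u.val v.val with h | h | h
    · show G.Adj (c u.val) (c v.val) ↔ _
      rw [(key u.val v.val h v.isLt).1, fin_cycle_adj hl4 u v h]
    · have : u = v := Fin.ext h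
      subst this
      simp
    · show G.Adj (c u.val) (c v.val) ↔ _
      rw [G.adj_comm, (cycleGraph ℓ).adj_comm,
        (key v.val u.val h u.isLt).1, fin_cycle_adj hl4 v u h]

lemma sep_clique (G : SimpleGraph V) (hG : Chordal G) {s S : Finset V} {a b : V}
    (hsep : ¬ ReachIn G (↑s \ ↑S : Set V) a b)
    (hnA : ∀ u ∈ S, ∃ w, ReachIn G (↑s \ ↑S : Set V) a w ∧ G.Adj w u)
    (hnB : ∀ u ∈ S, ∃ w, ReachIn G (↑s \ ↑S : Set V) b w ∧ G.Adj w u) :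
    ∀ x ∈ S, ∀ y ∈ S, x ≠ y → G.Adj x y := by
  intro x hx y hy hxy
  by_contra hnadj
  set t : Set V := ↑s \ ↑S with ht
  have hABs : ∀ u v, ReachIn G t a u → ReachIn G t b v → ¬ G.Adj u v ∧ u ≠ v := by
    intro u v hu hv
    refine ⟨fun hadj => hsep (hu.trans (hv.tail hadj.symm hu.mem_right).symm), ?_⟩
    rintro rfl
    exact hsep (hu.trans hv.symm)
  have build : ∀ c : V, (∀ u ∈ S, ∃ w, ReachIn G t c w ∧ G.Adj w u) →
      ∃ n, ∃ p : ℕ → V, p 0 = x ∧ p n = y ∧ (∀ i < n, G.Adj (p i) (p (i+1))) ∧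
        (∀ i, 0 < i → i < n → ReachIn G t c (p i)) := by
    intro c hnbr
    obtain ⟨wx, hwx, hwxadj⟩ := hnbr x hx
    obtain ⟨wy, hwy, hwyadj⟩ := hnbr y hy
    obtain ⟨n, p, hp0, hpn, hchain, hreach⟩ := (hwx.symm.trans hwy).exists_walk
    refine ⟨n + 2, fun i => if i = 0 then x else if i ≤ n + 1 then p (i - 1) else y,
      by simp, by simp [show ¬ (n + 2 ≤ n + 1) by omega], ?_, ?_⟩
    · intro i hi
      rcases Nat.eq_or_lt_of_le (Nat.zero_le i) with h0 | h0
      · simp only [← h0, if_pos, Nat.zero_add, show (1:ℕ) ≠ 0 by omega, if_neg,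
          show (1:ℕ) ≤ n + 1 by omega, if_pos, if_false]
        simpa [hp0] using hwxadj.symm
      · rcases Nat.lt_or_ge i (n + 1) with h1 | h1
        · simp only [show i ≠ 0 by omega, show i + 1 ≠ 0 by omega, if_neg, if_false,
            show i ≤ n + 1 by omega, show i + 1 ≤ n + 1 by omega, if_pos]
          simpa [show i - 1 + 1 = i by omega] using hchain (i - 1) (by omega)
        · have h2 : i = n + 1 := by omega
          subst h2
          simp only [show n + 1 ≠ 0 by omega, show n + 1 + 1 ≠ 0 by omega, if_neg, if_false,
            le_refl, if_pos, show ¬ (n + 1 + 1 ≤ n + 1) by omega]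
          simpa [hpn] using hwyadj
    · intro i hi0 hin
      simp only [show i ≠ 0 by omega, if_neg, if_false, show i ≤ n + 1 by omega, if_pos]
      exact hwx.trans (hreach (i - 1) (by omega))
  obtain ⟨n, p, hn2, hp0, hpn, hpint, hpinj, hpadj⟩ :=
    exists_induced_path G (ReachIn G t a) x y hxy hnadj (build a hnA)
  obtain ⟨m, q, hm2, hq0, hqm, hqint, hqinj, hqadj⟩ :=
    exists_induced_path G (ReachIn G t b) x y hxy hnadj (build b hnB)
  exact no_double_path G hG hn2 hm2 hp0 hpn hq0 hqm hpint hqint hpinj hpadj hqinj hqadj hABs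

lemma dirac_aux (G : SimpleGraph V) (hG : Chordal G) :
    ∀ N : ℕ, ∀ s : Finset V, s.card ≤ N → s.Nonempty →
      (∀ x ∈ s, ∀ y ∈ s, x ≠ y → G.Adj x y) ∨
      ∃ a ∈ s, ∃ b ∈ s, a ≠ b ∧ ¬ G.Adj a b ∧
        (∀ u ∈ s, ∀ w ∈ s, G.Adj a u → G.Adj a w → u ≠ w → G.Adj u w) ∧
        (∀ u ∈ s, ∀ w ∈ s, G.Adj b u → G.Adj b w → u ≠ w → G.Adj u w) := by
  intro N
  induction N with
  | zero =>
    intro s hcard hne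
    have := hne.card_pos
    omega
  | succ N ih =>
    intro s hcard hne
    classical
    by_cases hclq : ∀ x ∈ s, ∀ y ∈ s, x ≠ y → G.Adj x y
    · exact Or.inl hclq
    push_neg at hclq
    obtain ⟨a, has, b, hbs, hab, hnadj⟩ := hclq
    -- a minimum-size a-b separator S
    set Pp : Finset V → Prop := fun S => S ⊆ s ∧ a ∉ S ∧ b ∉ S ∧
      ¬ ReachIn G (↑s \ ↑S : Set V) a b with hPp
    have h0 : Pp (s \ {a, b}) := by
      refine ⟨Finset.sdiff_subset, by simp, by simp, fun h => ?_⟩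
      refine hab (h.eq_of_pair (fun w hw => ?_) hnadj)
      obtain ⟨hw1, hw2⟩ := hw
      by_contra hcon
      push_neg at hcon
      exact hw2 (Finset.mem_coe.2 (Finset.mem_sdiff.2
        ⟨Finset.mem_coe.1 hw1, by simp [hcon.1, hcon.2]⟩))
    have hexk : ∃ k, ∃ S, Pp S ∧ S.card = k := ⟨_, _, h0, rfl⟩
    obtain ⟨S, hPS, hScard⟩ := Nat.find_spec hexk
    have hminS : ∀ S', Pp S' → S.card ≤ S'.card := by
      intro S' hS'
      rw [hScard]
      by_contra hlt
      exact Nat.find_min hexk (by omega) ⟨S', hS', rfl⟩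
    obtain ⟨hSs, haS, hbS, hsep⟩ := hPS
    set t : Set V := ↑s \ ↑S with htdef
    have hmem_t : ∀ v, v ∈ s → v ∉ S → v ∈ t := fun v h1 h2 => ⟨h1, by simpa using h2⟩
    have hmin' : ∀ u ∈ S, ReachIn G (↑s \ ↑(S.erase u) : Set V) a b := by
      intro u hu
      by_contra h
      have hP : Pp (S.erase u) :=
        ⟨(Finset.erase_subset _ _).trans hSs, fun h' => haS (Finset.mem_of_mem_erase h'),
          fun h' => hbS (Finset.mem_of_mem_erase h'), h⟩
      have := hminS _ hP
      have := Finset.card_erase_of_mem hu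
      have := Finset.card_pos.2 ⟨u, hu⟩
      omega
    have hsub_er : ∀ u, ((↑s \ ↑(S.erase u) : Set V) \ {u}) ⊆ t := by
      intro u v hv
      obtain ⟨⟨hv1, hv2⟩, hv3⟩ := hv
      simp only [Set.mem_singleton_iff] at hv3
      refine ⟨hv1, fun hvS => ?_⟩
      exact hv2 (Finset.mem_coe.2 (Finset.mem_erase.2 ⟨hv3, Finset.mem_coe.1 hvS⟩))
    have hnA : ∀ u ∈ S, ∃ w, ReachIn G t a w ∧ G.Adj w u := by
      intro u hu
      rcases (hmin' u hu).avoid (fun h => haS (h ▸ hu)) with h3 | ⟨w, h3, hwu⟩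
      · exact absurd (h3.mono (hsub_er u)) hsep
      · exact ⟨w, h3.mono (hsub_er u), hwu⟩
    have hnB : ∀ u ∈ S, ∃ w, ReachIn G t b w ∧ G.Adj w u := by
      intro u hu
      rcases (hmin' u hu).symm.avoid (fun h => hbS (h ▸ hu)) with h3 | ⟨w, h3, hwu⟩
      · exact absurd (h3.mono (hsub_er u)).symm hsep
      · exact ⟨w, h3.mono (hsub_er u), hwu⟩
    have hSclq := sep_clique G hG hsep hnA hnB
    have hABs : ∀ u v, ReachIn G t a u → ReachIn G t b v → ¬ G.Adj u v ∧ u ≠ v := by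
      intro u v hu hv
      refine ⟨fun hadj => hsep (hu.trans (hv.tail hadj.symm hu.mem_right).symm), ?_⟩
      rintro rfl
      exact hsep (hu.trans hv.symm)
    -- one side of the separator contains a vertex simplicial in s
    have side : ∀ a' b' : V, a' ∈ s → b' ∈ s → a' ∉ S → b' ∉ S →
        ¬ ReachIn G t a' b' →
        ∃ c, ReachIn G t a' c ∧
          (∀ u ∈ s, ∀ w ∈ s, G.Adj c u → G.Adj c w → u ≠ w → G.Adj u w) := by
      intro a' b' ha's hb's ha'S hb'S hsep'
      set s1 : Finset V := s.filter (fun v => ReachIn G t a' v) ∪ S with hs1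
      have hmem_s1 : ∀ v, ReachIn G t a' v → v ∈ s1 := by
        intro v hv
        exact Finset.mem_union_left _ (Finset.mem_filter.2 ⟨hv.mem_right.1, hv⟩)
      have hs1sub : s1 ⊆ s := by
        intro v hv
        rcases Finset.mem_union.1 hv with h | h
        · exact (Finset.mem_filter.1 h).1
        · exact hSs h
      have hbs1 : b' ∉ s1 := by
        intro h
        rcases Finset.mem_union.1 h with h | h
        · exact hsep' (Finset.mem_filter.1 h).2
        · exact hb'S h
      have hclosure : ∀ v, ReachIn G t a' v → ∀ u ∈ s, G.Adj v u → u ∈ s1 := by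
        intro v hv u hus hadj
        by_cases huS : u ∈ S
        · exact Finset.mem_union_right _ huS
        · exact hmem_s1 u (hv.tail hadj (hmem_t u hus huS))
      have hcard1 : s1.card ≤ N := by
        have h1 : s1 ⊆ s.erase b' := by
          intro v hv
          exact Finset.mem_erase.2 ⟨fun h => hbs1 (h ▸ hv), hs1sub hv⟩
        have h2 := Finset.card_le_card h1
        have h3 := Finset.card_erase_of_mem hb's
        have h4 := Finset.card_pos.2 ⟨b', hb's⟩
        omega
      have hane : s1.Nonempty := ⟨a', hmem_s1 a' (ReachIn.refl (hmem_t a' ha's ha'S))⟩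
      rcases ih s1 hcard1 hane with hclq1 | ⟨c, hc1, d, hd1, hcd, hncd, hsc, hsd⟩
      · refine ⟨a', ReachIn.refl (hmem_t a' ha's ha'S), ?_⟩
        intro u hus w hws hau haw huw
        have hra : ReachIn G t a' a' := ReachIn.refl (hmem_t a' ha's ha'S)
        exact hclq1 u (hclosure a' hra u hus hau) w (hclosure a' hra w hws haw) huw
      · have hone : (ReachIn G t a' c ∧ ∀ u ∈ s1, ∀ w ∈ s1, G.Adj c u → G.Adj c w → u ≠ w → G.Adj u w) ∨
            (ReachIn G t a' d ∧ ∀ u ∈ s1, ∀ w ∈ s1, G.Adj d u → G.Adj d w → u ≠ w → G.Adj u w) := by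
          rcases Finset.mem_union.1 hc1 with h | h
          · exact Or.inl ⟨(Finset.mem_filter.1 h).2, hsc⟩
          · rcases Finset.mem_union.1 hd1 with h' | h'
            · exact Or.inr ⟨(Finset.mem_filter.1 h').2, hsd⟩
            · exact absurd (hSclq c h d h' hcd) hncd
        rcases hone with ⟨hrc, hsimp⟩ | ⟨hrc, hsimp⟩ <;>
        · refine ⟨_, hrc, ?_⟩
          intro u hus w hws hau haw huw
          exact hsimp u (hclosure _ hrc u hus hau) w (hclosure _ hrc w hws haw) hau haw huw
    obtain ⟨cA, hcA, hsA⟩ := side a b has hbs haS hbS hsep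
    obtain ⟨cB, hcB, hsB⟩ := side b a hbs has hbS haS (fun h => hsep h.symm)
    have hfact := hABs cA cB hcA hcB
    exact Or.inr ⟨cA, hcA.mem_right.1, cB, hcB.mem_right.1, hfact.2, hfact.1, hsA, hsB⟩

end ChordalAux

theorem chordal_simplicial {V : Type*} [Fintype V] [Nonempty V]
    (G : SimpleGraph V) (hG : Chordal G) :
    ∃ v : V, G.IsClique (G.neighborSet v) := by
  classical
  rcases dirac_aux G hG Finset.univ.card Finset.univ le_rfl Finset.univ_nonempty with
    h | ⟨a, -, b, -, -, -, hsa, -⟩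
  · refine ⟨Classical.arbitrary V, fun u hu w hw huw => ?_⟩
    exact h u (Finset.mem_univ u) w (Finset.mem_univ w) huw
  · refine ⟨a, fun u hu w hw huw => ?_⟩
    exact hsa u (Finset.mem_univ u) w (Finset.mem_univ w) hu hw huw
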